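/- Let n ≥ 2, let P be a nonempty antichain, and let J = Hom(P,[n]) be the full poset of isotone maps (which here consists of all functions P → [n]). Then every face G of Δ(J) of cardinality |P|·(n−1) − 1 is contained in exactly two facets of Δ(J). -/
import Mathlib


variable {P : Type*} [PartialOrder P] [Fintype P] [DecidableEq P]

/-- The graph `Γφ = {(p, φ p) | p ∈ P}` of a map φ : P → [n], as a finite set. -/
def GammaF {n : ℕ} (φ : P → Fin n) : Finset (P × Fin n) :=
  Finset.univ.image fun p => (p, φ p)

/-- F is a face of Δ(J) iff F misses the graph Γφ of some φ ∈ J. -/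
def IsFace {n : ℕ} (J : Set (P → Fin n)) (F : Finset (P × Fin n)) : Prop :=
  ∃ φ ∈ J, ∀ p : P, (p, φ p) ∉ F

/-- A facet of Δ(J) is a face maximal under inclusion. -/
def IsFacet {n : ℕ} (J : Set (P → Fin n)) (F : Finset (P × Fin n)) : Prop :=
  IsFace J F ∧ ∀ G : Finset (P × Fin n), IsFace J G → F ⊆ G → F = G

lemma mem_GammaF {n : ℕ} (φ : P → Fin n) (x : P × Fin n) :
    x ∈ GammaF φ ↔ φ x.1 = x.2 := by
  obtain ⟨p, j⟩ := x
  simp [GammaF, Prod.ext_iff]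

lemma card_GammaF {n : ℕ} (φ : P → Fin n) :
    (GammaF φ).card = Fintype.card P := by
  rw [GammaF, Finset.card_image_of_injective _ (fun a b h => congrArg Prod.fst h),
    Finset.card_univ]

lemma gamma_compl_face {n : ℕ} (hanti : ∀ a b : P, a ≤ b → a = b) (φ : P → Fin n) :
    IsFace {ψ : P → Fin n | Monotone ψ} (GammaF φ)ᶜ := by
  refine ⟨φ, fun a b h => by rw [hanti a b h], fun p => ?_⟩
  simp [mem_GammaF]

lemma isFacet_iff {n : ℕ} (hanti : ∀ a b : P, a ≤ b → a = b)
    (F : Finset (P × Fin n)) :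
    IsFacet {φ : P → Fin n | Monotone φ} F ↔ ∃ φ : P → Fin n, F = (GammaF φ)ᶜ := by
  constructor
  · rintro ⟨⟨φ, -, hφ⟩, hmax⟩
    refine ⟨φ, hmax _ (gamma_compl_face hanti φ) ?_⟩
    intro x hx
    rw [Finset.mem_compl]
    intro hmem
    have h1 := (mem_GammaF φ x).mp hmem
    exact hφ x.1 (by rwa [h1, Prod.mk.eta])
  · rintro ⟨φ, rfl⟩
    refine ⟨gamma_compl_face hanti φ, ?_⟩
    rintro F' ⟨ψ, -, hψ⟩ hsub
    have hsub2 : GammaF ψ ⊆ GammaF φ := by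
      intro y hy
      have h1 := (mem_GammaF ψ y).mp hy
      have h2 : y ∉ F' := by
        have := hψ y.1; rwa [h1, Prod.mk.eta] at this
      by_contra hnot
      exact h2 (hsub (Finset.mem_compl.mpr hnot))
    have heq : GammaF ψ = GammaF φ :=
      Finset.eq_of_subset_of_card_le hsub2 (by rw [card_GammaF, card_GammaF])
    have hsub3 : F' ⊆ (GammaF φ)ᶜ := by
      intro y hy
      rw [Finset.mem_compl, ← heq]
      intro hmem
      have h1 := (mem_GammaF ψ y).mp hmem
      exact hψ y.1 (by rwa [h1, Prod.mk.eta])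
    exact Finset.Subset.antisymm hsub hsub3

/-- Let n ≥ 2, P a nonempty antichain, and J = Hom(P,[n]) the full poset of isotone maps
(= all functions P → [n]).  Then every face G of Δ(J) of cardinality |P|·(n−1) − 1 is
contained in exactly two facets of Δ(J). -/
theorem stmt18 [Nonempty P] {n : ℕ} (hn : 2 ≤ n)
    (hanti : ∀ a b : P, a ≤ b → a = b)
    (G : Finset (P × Fin n))
    (hG : IsFace {φ : P → Fin n | Monotone φ} G)
    (hcard : G.card = Fintype.card P * (n - 1) - 1) :
    ∃ F₁ F₂ : Finset (P × Fin n), F₁ ≠ F₂ ∧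
      (∀ F : Finset (P × Fin n),
        (IsFacet {φ : P → Fin n | Monotone φ} F ∧ G ⊆ F) ↔ (F = F₁ ∨ F = F₂)) := by
  obtain ⟨φ, -, hφ⟩ := hG
  have hGsub : G ⊆ (GammaF φ)ᶜ := by
    intro x hx
    rw [Finset.mem_compl]
    intro hmem
    have h1 := (mem_GammaF φ x).mp hmem
    exact hφ x.1 (by rwa [h1, Prod.mk.eta])
  -- cardinality computations
  obtain ⟨k, rfl⟩ : ∃ k, n = k + 1 := ⟨n - 1, by omega⟩
  have hk : 1 ≤ k := by omega
  set m := Fintype.card P with hm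
  have hm1 : 1 ≤ m := Fintype.card_pos
  have hmk : 1 ≤ m * k := Nat.one_le_of_lt (Nat.lt_of_lt_of_le Nat.zero_lt_one
    (Nat.le_mul_of_pos_left 1 (by omega) |>.trans (Nat.mul_le_mul_left m hk) )) |>.trans
    (le_refl _)
  have hcardC : ((GammaF φ)ᶜ).card = m * k := by
    rw [Finset.card_compl, card_GammaF, ← hm, Fintype.card_prod, Fintype.card_fin, ← hm]
    rw [Nat.mul_succ, Nat.add_sub_cancel]
  have hcard' : G.card = m * k - 1 := by
    simpa using hcard
  have hone : ((GammaF φ)ᶜ \ G).card = 1 := by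
    rw [Finset.card_sdiff_of_subset hGsub, hcardC, hcard', Nat.sub_sub_self hmk]
  obtain ⟨x, hx⟩ := Finset.card_eq_one.mp hone
  have hxmem : x ∈ (GammaF φ)ᶜ \ G := by rw [hx]; exact Finset.mem_singleton_self x
  have hxG : x ∉ G := (Finset.mem_sdiff.mp hxmem).2
  have hxφ : φ x.1 ≠ x.2 := by
    have := Finset.mem_compl.mp (Finset.mem_sdiff.mp hxmem).1
    intro h
    exact this ((mem_GammaF φ x).mpr h)
  have hsplit : ∀ y : P × Fin (k + 1), y ∉ G → y ∈ GammaF φ ∨ y = x := by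
    intro y hy
    by_cases h : y ∈ GammaF φ
    · exact Or.inl h
    · right
      have : y ∈ (GammaF φ)ᶜ \ G := Finset.mem_sdiff.mpr ⟨Finset.mem_compl.mpr h, hy⟩
      rw [hx] at this
      exact Finset.mem_singleton.mp this
  set φ' : P → Fin (k + 1) := Function.update φ x.1 x.2 with hφ'def
  have hφ'x : φ' x.1 = x.2 := Function.update_self _ _ _
  have hφ'ne : ∀ p : P, p ≠ x.1 → φ' p = φ p := fun p hp => Function.update_of_ne hp _ _
  refine ⟨(GammaF φ)ᶜ, (GammaF φ')ᶜ, ?_, ?_⟩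
  · intro h
    have h1 : x ∈ (GammaF φ)ᶜ := (Finset.mem_sdiff.mp hxmem).1
    rw [h, Finset.mem_compl] at h1
    exact h1 ((mem_GammaF φ' x).mpr hφ'x)
  · intro F
    constructor
    · rintro ⟨hFac, hGF⟩
      obtain ⟨ψ, rfl⟩ := (isFacet_iff hanti F).mp hFac
      have hψnot : ∀ p : P, (p, ψ p) ∉ G := by
        intro p hp
        have := hGF hp
        rw [Finset.mem_compl] at this
        exact this ((mem_GammaF ψ (p, ψ p)).mpr rfl)
      have hcases : ∀ p : P, (p, ψ p) ∈ GammaF φ ∨ (p, ψ p) = x :=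
        fun p => hsplit _ (hψnot p)
      have hne : ∀ p : P, p ≠ x.1 → ψ p = φ p := by
        intro p hp
        rcases hcases p with h | h
        · exact ((mem_GammaF φ (p, ψ p)).mp h).symm
        · exact absurd (congrArg Prod.fst h) hp
      rcases hcases x.1 with h | h
      · left
        have hψφ : ψ = φ := by
          funext p
          by_cases hp : p = x.1
          · subst hp; exact ((mem_GammaF φ (x.1, ψ x.1)).mp h).symm
          · exact hne p hp
        rw [hψφ]
      · right
        have hψφ' : ψ = φ' := by
          funext p
          by_cases hp : p = x.1
          · subst hp
            rw [hφ'x]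
            exact congrArg Prod.snd h
          · rw [hφ'ne p hp]; exact hne p hp
        rw [hψφ']
    · rintro (rfl | rfl)
      · exact ⟨(isFacet_iff hanti _).mpr ⟨φ, rfl⟩, hGsub⟩
      · refine ⟨(isFacet_iff hanti _).mpr ⟨φ', rfl⟩, ?_⟩
        intro y hy
        rw [Finset.mem_compl]
        intro hmem
        have h1 := (mem_GammaF φ' y).mp hmem
        by_cases hp : y.1 = x.1
        · have hy2 : y.2 = x.2 := by rw [← h1, hp, hφ'x]
          have : y = x := Prod.ext hp hy2
          exact hxG (this ▸ hy)
        · rw [hφ'ne y.1 hp] at h1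
          have := hGsub hy
          rw [Finset.mem_compl] at this
          exact this ((mem_GammaF φ y).mpr h1)
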